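/- Let a = (a₁,…,aₙ) be positive integers, H = {x ∈ ℝⁿ : Σ a_i x_i = 0}, I ⊆ {1,…,n} with I' = complement nonempty, and d_I = gcd{a_j : j ∈ I'}. Define ρ : ℤⁿ ∩ H → ℤ^I by projection onto the I-coordinates and ψ : ℤ^I → ℤ/d_Iℤ by (y_i) ↦ Σ a_i y_i mod d_I. Then the sequence ℤⁿ ∩ H →^ρ ℤ^I →^ψ ℤ/d_Iℤ → 0 is exact: ψ is surjective (assuming gcd of all a_i is 1), and ker ψ = image of ρ. -/
import Mathlib

/-- Bézout for a finite set of naturals with integer coefficients. -/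
lemma bezout_finset (n : ℕ) (a : Fin n → ℕ) (s : Finset (Fin n)) :
    ∃ c : Fin n → ℤ, ∑ j ∈ s, (a j : ℤ) * c j = ((s.gcd a : ℕ) : ℤ) := by
  classical
  induction s using Finset.induction with
  | empty => exact ⟨0, by simp⟩
  | @insert i s hi ih =>
    obtain ⟨c, hc⟩ := ih
    refine ⟨fun j => if j = i then Nat.gcdA (a i) (s.gcd a)
      else Nat.gcdB (a i) (s.gcd a) * c j, ?_⟩
    rw [Finset.sum_insert hi, Finset.gcd_insert]
    have hsum : ∑ j ∈ s, (a j : ℤ) *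
        (if j = i then Nat.gcdA (a i) (s.gcd a) else Nat.gcdB (a i) (s.gcd a) * c j)
        = Nat.gcdB (a i) (s.gcd a) * ∑ j ∈ s, (a j : ℤ) * c j := by
      rw [Finset.mul_sum]
      refine Finset.sum_congr rfl fun j hj => ?_
      have : j ≠ i := fun h => hi (h ▸ hj)
      simp [this]; ring
    simp only [if_pos rfl]
    rw [hsum, hc]
    have : GCDMonoid.gcd (a i) (s.gcd a) = Nat.gcd (a i) (s.gcd a) := rfl
    rw [this, Nat.gcd_eq_gcd_ab (a i) (s.gcd a)]
    simp only [if_true]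
    ring

/-- exactness of `ℤⁿ ∩ H →^ρ ℤ^I →^ψ ℤ/d_Iℤ → 0`, where
`H = {x : Σ aᵢxᵢ = 0}`, `ρ` is the projection to the `I`-coordinates,
`ψ(y) = Σ_{i∈I} aᵢyᵢ mod d_I` and `d_I = gcd{a_j : j ∉ I}`:  `ψ` is surjective
(using `gcd(a₁,…,aₙ) = 1`), and `ker ψ = im ρ`. -/
theorem kernel_sequence_exact
    (n : ℕ) (a : Fin n → ℕ) (ha : ∀ i, 0 < a i)
    (hgcd : Finset.univ.gcd a = 1)
    (I : Finset (Fin n)) (hI : I ≠ Finset.univ) :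
    let d : ℕ := Iᶜ.gcd a
    -- ψ is surjective
    (∀ m : ZMod d, ∃ y : Fin n → ℤ,
        ((∑ i ∈ I, (a i : ℤ) * y i : ℤ) : ZMod d) = m) ∧
    -- ker ψ = im ρ
    (∀ y : Fin n → ℤ,
        ((∑ i ∈ I, (a i : ℤ) * y i : ℤ) : ZMod d) = 0 ↔
          ∃ z : Fin n → ℤ, (∀ i ∈ I, z i = y i) ∧ ∑ i, (a i : ℤ) * z i = 0) := by
  classical
  intro d
  have hne : Iᶜ.Nonempty := by
    rw [Finset.nonempty_iff_ne_empty]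
    intro h
    exact hI ((Finset.compl_eq_empty_iff I).mp h)
  obtain ⟨j0, hj0⟩ := hne
  have hd : 0 < d := by
    rcases Nat.eq_zero_or_pos d with h | h
    · exfalso
      have := Finset.gcd_eq_zero_iff.mp h j0 hj0
      exact (ha j0).ne' this
    · exact h
  haveI : NeZero d := ⟨hd.ne'⟩
  obtain ⟨cI, hcI⟩ := bezout_finset n a I
  obtain ⟨cJ, hcJ⟩ := bezout_finset n a Iᶜ
  have hgcd2 : Nat.gcd (I.gcd a) d = 1 := by
    have h := Finset.gcd_union (s₁ := I) (s₂ := Iᶜ) (f := a)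
    rw [Finset.union_compl, hgcd] at h
    exact h.symm
  constructor
  · intro m
    set g : ℕ := I.gcd a with hg
    set u : ℤ := Nat.gcdA g d with hu
    set v : ℤ := Nat.gcdB g d with hv
    have h1 : (1 : ℤ) = g * u + d * v := by
      have := Nat.gcd_eq_gcd_ab g d
      rw [hgcd2] at this
      exact_mod_cast this
    refine ⟨fun i => (m.val : ℤ) * u * cI i, ?_⟩
    have hsum : ∑ i ∈ I, (a i : ℤ) * ((m.val : ℤ) * u * cI i)
        = (m.val : ℤ) * u * (g : ℤ) := by
      rw [← hcI, Finset.mul_sum]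
      exact Finset.sum_congr rfl fun i _ => by ring
    rw [hsum]
    have h2 : (m.val : ℤ) * u * (g : ℤ) = (m.val : ℤ) - (m.val : ℤ) * v * d := by
      have : (g : ℤ) * u = 1 - d * v := by linarith [h1]
      calc (m.val : ℤ) * u * g = (m.val : ℤ) * (g * u) := by ring
        _ = (m.val : ℤ) * (1 - d * v) := by rw [this]
        _ = (m.val : ℤ) - (m.val : ℤ) * v * d := by ring
    rw [h2]
    push_cast
    simp [ZMod.natCast_self, ZMod.natCast_val, ZMod.cast_id]
  · intro y
    constructor
    · intro h
      have hdvd : (d : ℤ) ∣ ∑ i ∈ I, (a i : ℤ) * y i :=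
        (ZMod.intCast_zmod_eq_zero_iff_dvd _ d).mp h
      obtain ⟨k, hk⟩ := hdvd
      refine ⟨fun i => if i ∈ I then y i else -k * cJ i, fun i hi => by simp [hi], ?_⟩
      rw [← Finset.sum_add_sum_compl I]
      have h1 : ∑ i ∈ I, (a i : ℤ) * (if i ∈ I then y i else -k * cJ i)
          = ∑ i ∈ I, (a i : ℤ) * y i :=
        Finset.sum_congr rfl fun i hi => by simp [hi]
      have h2 : ∑ i ∈ Iᶜ, (a i : ℤ) * (if i ∈ I then y i else -k * cJ i)
          = -k * (d : ℤ) := by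
        rw [← hcJ, Finset.mul_sum]
        refine Finset.sum_congr rfl fun i hi => ?_
        have : i ∉ I := Finset.mem_compl.mp hi
        simp [this]; ring
      rw [h1, h2, hk]
      ring
    · rintro ⟨z, hz, hsum⟩
      have h1 : ∑ i ∈ I, (a i : ℤ) * y i = -∑ i ∈ Iᶜ, (a i : ℤ) * z i := by
        have := Finset.sum_add_sum_compl I (fun i => (a i : ℤ) * z i)
        rw [hsum] at this
        have h2 : ∑ i ∈ I, (a i : ℤ) * z i = ∑ i ∈ I, (a i : ℤ) * y i :=
          Finset.sum_congr rfl fun i hi => by rw [hz i hi]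
        linarith [this, h2]
      rw [h1, Int.cast_neg, neg_eq_zero, Int.cast_sum]
      apply Finset.sum_eq_zero
      intro i hi
      have hdvd : (d : ℤ) ∣ (a i : ℤ) := Int.natCast_dvd_natCast.mpr (Finset.gcd_dvd hi)
      have hz0 : ((a i : ℤ) : ZMod d) = 0 := (ZMod.intCast_zmod_eq_zero_iff_dvd _ _).mpr hdvd
      rw [Int.cast_mul, hz0, zero_mul]
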